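/- (Flatness of the decoupling caps of the moment surface.) There is an absolute constant C > 1 such that the following holds. For every δ ∈ (0,1), every integer k with δ^{1/3} ≤ 2^{-k} ≤ 1, and every interval τ_k = [a, a + (2^k δ)^{1/2}] ⊆ [-1/2, 1/2], the cap τ̃_k = N_δ(x(τ_k × [2^{-k}, 2^{-k+1}])) contains a convex set R such that τ̃_k ⊆ C·R, where C·R denotes the dilation of R by the factor C about its center. In particular each cap τ̃_k is flat, so it cannot be decoupled further without significant loss. -/
import Mathlib


open Set

noncomputable section

abbrev R3 : Type := ℝ × ℝ × ℝ

/-- The vertical `δ`-neighborhood of a set `E ⊆ ℝ³`. -/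
def vnbhd (δ : ℝ) (E : Set R3) : Set R3 :=
  {q | ∃ p ∈ E, ∃ v ∈ Icc (-δ) δ, q = p + ((0 : ℝ), (0 : ℝ), v)}

/-- The parametrization `x(t,s)` of the moment surface. -/
def mx (ts : ℝ × ℝ) : R3 :=
  (ts.1 + ts.2, ts.1 ^ 2 + 2 * ts.1 * ts.2, ts.1 ^ 3 + 3 * ts.1 ^ 2 * ts.2)

/-- The dilation of a set `R` by the factor `C` about the point `z`. -/
def dilate (C : ℝ) (z : R3) (R : Set R3) : Set R3 :=
  (fun y => z + C • (y - z)) '' R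

set_option maxHeartbeats 1000000 in
/-- The affine coordinate map adapted to the tangent plane at parameter `a`. -/
def aff (a : ℝ) (p : ℝ × ℝ × ℝ) : R3 :=
  (a + p.1, a^2 + 2*a*p.1 + 2*p.2.1, a^3 + 3*a^2*p.1 + 6*a*p.2.1 + p.2.2)

set_option maxHeartbeats 1000000 in
/-- **Flatness of the decoupling caps of the moment surface**: there is an absolute
constant `C > 1` such that every cap `τ̃_k = N_δ(x(τ_k × [2^{-k}, 2^{-k+1}]))`, with
`δ^{1/3} ≤ 2^{-k} ≤ 1` and `τ_k = [a, a + (2^k δ)^{1/2}] ⊆ [-1/2, 1/2]`, contains a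
convex set `R` with `τ̃_k ⊆ C·R` (dilation about a center of `R`); i.e. each cap is flat. -/
theorem moment_caps_flat :
    ∃ C : ℝ, 1 < C ∧ ∀ δ : ℝ, 0 < δ → δ < 1 → ∀ k : ℤ,
      δ ^ ((1:ℝ)/3) ≤ (2:ℝ) ^ (-k) → (2:ℝ) ^ (-k) ≤ 1 →
      ∀ a : ℝ, -(1/2) ≤ a → a + ((2:ℝ) ^ k * δ) ^ ((1:ℝ)/2) ≤ 1/2 →
      ∃ R : Set R3, Convex ℝ R ∧
        R ⊆ vnbhd δ (mx '' (Icc a (a + ((2:ℝ) ^ k * δ) ^ ((1:ℝ)/2)) ×ˢ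
          Icc ((2:ℝ) ^ (-k)) ((2:ℝ) ^ (-k + 1)))) ∧
        ∃ z : R3,
          vnbhd δ (mx '' (Icc a (a + ((2:ℝ) ^ k * δ) ^ ((1:ℝ)/2)) ×ˢ
            Icc ((2:ℝ) ^ (-k)) ((2:ℝ) ^ (-k + 1)))) ⊆ dilate C z R := by
  refine ⟨100, by norm_num, ?_⟩
  intro δ hδ0 hδ1 k hk1 hk2 a ha1 ha2
  set σ : ℝ := (2:ℝ) ^ (-k) with hσdef
  set L : ℝ := ((2:ℝ) ^ k * δ) ^ ((1:ℝ)/2) with hLdef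
  have hσ0 : 0 < σ := by positivity
  have h2k : σ * (2:ℝ)^k = 1 := by
    rw [hσdef, ← zpow_add₀ (by norm_num : (2:ℝ) ≠ 0)]; simp
  have hL0 : 0 < L := by
    have : (0:ℝ) < (2:ℝ)^k * δ := by positivity
    exact Real.rpow_pos_of_pos this _
  have hL2 : L ^ 2 = (2:ℝ)^k * δ := by
    rw [hLdef, ← Real.sqrt_eq_rpow]
    exact Real.sq_sqrt (by positivity)
  have hσL2 : σ * L ^ 2 = δ := by
    rw [hL2, ← mul_assoc, h2k, one_mul]
  have hδσ3 : δ ≤ σ ^ 3 := by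
    have h3 : (δ ^ ((1:ℝ)/3)) ^ (3:ℕ) = δ := by
      rw [← Real.rpow_natCast (δ ^ ((1:ℝ)/3)) 3, ← Real.rpow_mul hδ0.le]; norm_num
    calc δ = (δ ^ ((1:ℝ)/3)) ^ (3:ℕ) := h3.symm
      _ ≤ σ ^ 3 := pow_le_pow_left₀ (Real.rpow_nonneg hδ0.le _) hk1 3
  have hLσ : L ≤ σ := by
    have h1 : L ^ 2 ≤ σ ^ 2 := by
      have := hσL2
      nlinarith
    nlinarith
  -- rewrite the upper endpoint of the s-interval
  have h2σ : (2:ℝ)^(-k+1) = 2 * σ := by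
    rw [hσdef, zpow_add₀ (by norm_num : (2:ℝ) ≠ 0), zpow_one]; ring
  rw [h2σ]
  -- the box in coordinates and the convex set R
  set B : Set (ℝ × ℝ × ℝ) :=
    Icc (σ + L/4) (2*σ) ×ˢ Icc 0 (σ*L/4) ×ˢ Icc (-(δ/2)) (δ/2) with hBdef
  have hBconv : Convex ℝ B := (convex_Icc _ _).prod ((convex_Icc _ _).prod (convex_Icc _ _))
  refine ⟨aff a '' B, ?_, ?_, ?_⟩
  · -- convexity
    rintro _ ⟨x, hx, rfl⟩ _ ⟨y, hy, rfl⟩ t u ht hu htu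
    refine ⟨t • x + u • y, hBconv hx hy ht hu htu, ?_⟩
    obtain ⟨x1, x2, x3⟩ := x
    obtain ⟨y1, y2, y3⟩ := y
    have hu' : u = 1 - t := by linarith
    subst hu'
    simp only [aff, Prod.smul_mk, Prod.mk_add_mk, smul_eq_mul, Prod.mk.injEq]
    refine ⟨by ring, by ring, by ring⟩
  · -- R ⊆ cap
    rintro _ ⟨⟨α, β, w⟩, hmem, rfl⟩
    obtain ⟨hα, hβ, hw⟩ := hmem
    simp only [mem_Icc] at hα hβ hw
    -- find u by the intermediate value theorem
    have hIVT := intermediate_value_Icc (by positivity : (0:ℝ) ≤ L/4)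
      (Continuous.continuousOn (by fun_prop : Continuous fun u : ℝ => α*u - u^2/2))
    have hβmem : β ∈ Icc ((fun u : ℝ => α*u - u^2/2) 0) ((fun u : ℝ => α*u - u^2/2) (L/4)) := by
      simp only [mem_Icc]
      constructor
      · nlinarith [hβ.1]
      · nlinarith [hβ.2, hα.1]
    obtain ⟨u, hu, hgu⟩ := hIVT hβmem
    simp only at hgu
    simp only [mem_Icc] at hu
    subst hgu
    refine ⟨mx (a + u, α - u), ⟨(a + u, α - u), ?_, rfl⟩, w - (3*α*u^2 - 2*u^3), ?_, ?_⟩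
    · refine mem_prod.mpr ⟨mem_Icc.mpr ⟨show a ≤ a + u by linarith [hu.1],
        show a + u ≤ a + L by linarith [hu.2, hL0]⟩,
        mem_Icc.mpr ⟨show σ ≤ α - u by linarith [hα.1, hu.2],
        show α - u ≤ 2*σ by linarith [hα.2, hu.1]⟩⟩
    · -- v ∈ [-δ, δ]
      have hE0 : 0 ≤ 3*α*u^2 - 2*u^3 := by nlinarith [hα.1, hu.1, hu.2, sq_nonneg u]
      have hEδ : 3*α*u^2 - 2*u^3 ≤ δ/2 := by
        nlinarith [hα.2, hu.1, hu.2, hσL2, sq_nonneg u, hσ0, hL0]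
      exact mem_Icc.mpr ⟨by linarith [hw.1], by linarith [hw.2]⟩
    · simp only [aff, mx, Prod.mk_add_mk, Prod.mk.injEq]
      refine ⟨by ring, by ring, by ring⟩
  · -- cap ⊆ dilate 100 z R
    refine ⟨aff a ((3*σ + L/4)/2, σ*L/8, 0), ?_⟩
    rintro _ ⟨_, ⟨⟨t, s⟩, hts, rfl⟩, v, hv, rfl⟩
    obtain ⟨ht, hs⟩ := hts
    simp only [mem_Icc] at ht hs hv
    set α : ℝ := (t - a) + s with hαdef
    set β : ℝ := (t - a)^2/2 + s*(t - a) with hβdef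
    set w : ℝ := (t - a)^3 + 3*s*(t - a)^2 + v with hwdef
    set m₁ : ℝ := (3*σ + L/4)/2 with hm₁def
    set m₂ : ℝ := σ*L/8 with hm₂def
    have hu0 : 0 ≤ t - a := by linarith [ht.1]
    have huL : t - a ≤ L := by linarith [ht.2]
    refine ⟨aff a (m₁ + (α - m₁)/100, m₂ + (β - m₂)/100, w/100), ⟨(m₁ + (α - m₁)/100, m₂ + (β - m₂)/100, w/100), ?_, rfl⟩, ?_⟩
    · -- membership in B
      have hα1 : σ ≤ α := by rw [hαdef]; linarith [hs.1]
      have hα2 : α ≤ 3*σ := by rw [hαdef]; linarith [hs.2, hLσ]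
      have hβ1 : 0 ≤ β := by rw [hβdef]; nlinarith [hs.1, hσ0]
      have hβ2 : β ≤ (5/2)*(σ*L) := by
        rw [hβdef]
        nlinarith [hs.2, hσ0, hL0, hLσ]
      have hw1 : -δ ≤ w := by
        rw [hwdef]
        nlinarith [hv.1, hs.1, hσ0, sq_nonneg (t-a)]
      have hw2 : w ≤ 8*δ := by
        have h7 : (t-a)^3 + 3*s*(t-a)^2 ≤ 7*(σ*L^2) := by
          nlinarith [mul_nonneg (sq_nonneg (t-a)) (show (0:ℝ) ≤ σ - (t-a) by linarith),
            mul_nonneg (sq_nonneg (t-a)) (show (0:ℝ) ≤ 2*σ - s by linarith [hs.2]),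
            mul_nonneg hσ0.le (show (0:ℝ) ≤ L^2 - (t-a)^2 by nlinarith)]
        rw [hwdef]
        linarith [hv.2, hσL2, h7]
      refine mem_prod.mpr ⟨mem_Icc.mpr ⟨?_, ?_⟩, mem_prod.mpr ⟨mem_Icc.mpr ⟨?_, ?_⟩, mem_Icc.mpr ⟨?_, ?_⟩⟩⟩
      · rw [hm₁def]; linarith
      · rw [hm₁def]; linarith
      · rw [hm₂def]; nlinarith [hσ0.le, hL0.le]
      · rw [hm₂def]; nlinarith [hσ0.le, hL0.le]
      · linarith
      · linarith
    · -- the dilation equality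
      show _ + (100:ℝ) • (_ - _) = _
      simp only [aff, mx, hαdef, hβdef, hwdef, Prod.mk_add_mk, Prod.mk_sub_mk,
        Prod.smul_mk, smul_eq_mul, Prod.mk.injEq]
      refine ⟨by ring, by ring, by ring⟩
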